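/- Let (N(t), t ≥ 0) be nonnegative integer-valued random variables, Z an almost surely positive random variable, c : [0,∞) → (0,∞) with c(t) → ∞, and suppose N(t)/c(t) → Z almost surely. Let X₁, X₂, … be a strictly stationary and ergodic sequence with essential supremum +∞, (kₙ) integers with 1 ≤ kₙ ≤ n, kₙ/n → 1, and a > 0. Then Σ_{i=1}^{N(t)} 1{X_{k_{N(t)}:N(t)} − a < X_i < X_{k_{N(t)}:N(t)}} / c(t) → 0 almost surely as t → ∞. -/

import Mathlib

open MeasureTheory Filter Set
open scoped Topology ENNReal

noncomputable section

/-- The shift map on real sequences. -/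
def seqShift (y : ℕ → ℝ) : ℕ → ℝ := fun n => y (n + 1)

/-- The path map associating to each sample point the sequence of observations. -/
def path {Ω : Type*} (X : ℕ → Ω → ℝ) (ω : Ω) : ℕ → ℝ := fun n => X n ω

/-- The `k`-th smallest value (k counted from 1) among `x 0, …, x (n-1)`. -/
def ordStat (k n : ℕ) (x : ℕ → ℝ) : ℝ :=
  ((List.ofFn (fun i : Fin n => x i)).insertionSort (· ≤ ·)).getD (k - 1) 0

/-- Number of observations among `x 0, …, x (n-1)` in the left `a`-neighborhood of the
`k`-th order statistic. -/
def nearCount (k n : ℕ) (a : ℝ) (x : ℕ → ℝ) : ℕ :=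
  ((Finset.range n).filter
    (fun i => ordStat k n x - a < x i ∧ x i < ordStat k n x)).card

/-- Sum of observations among `x 0, …, x (n-1)` in the left `a`-neighborhood of the
`k`-th order statistic. -/
def nearSum (k n : ℕ) (a : ℝ) (x : ℕ → ℝ) : ℝ :=
  ∑ i ∈ Finset.range n,
    if ordStat k n x - a < x i ∧ x i < ordStat k n x then x i else 0

/-- The right endpoint `sup {x : P(X ≤ x) < 1}` of the support of `X`, as an extended real. -/
def rightEndpoint {Ω : Type*} [MeasurableSpace Ω] (μ : Measure Ω) (X : Ω → ℝ) : EReal :=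
  sSup ((fun r : ℝ => (r : EReal)) '' {r : ℝ | μ {ω | X ω ≤ r} < 1})

set_option linter.unusedSectionVars false

lemma countP_ofFn {n : ℕ} (f : Fin n → ℝ) (p : ℝ → Bool) :
    (List.ofFn f).countP p = ∑ i : Fin n, if p (f i) then 1 else 0 := by
  induction n with
  | zero => simp
  | succ n ih =>
    rw [List.ofFn_succ, List.countP_cons, Fin.sum_univ_succ, ih]
    ring

lemma lt_ordStat {k n : ℕ} {x : ℕ → ℝ} {M : ℝ} (hk1 : 1 ≤ k) (hkn : k ≤ n)
    (hcard : ((Finset.range n).filter (fun i => x i ≤ M)).card < k) :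
    M < ordStat k n x := by
  by_contra h
  push_neg at h
  set l := List.ofFn (fun i : Fin n => x i) with hl
  set s := l.insertionSort (· ≤ ·) with hs
  have hlen : s.length = n := by rw [hs, List.length_insertionSort, hl, List.length_ofFn]
  have hklen : k - 1 < s.length := by omega
  have hget : ordStat k n x = s[k-1] := by
    rw [ordStat]
    exact List.getD_eq_getElem _ _ hklen
  have hsort : s.Pairwise (· ≤ ·) := List.pairwise_insertionSort _ _
  have hfirst : ∀ i (hilt : i < s.length), i < k → s[i] ≤ M := by
    intro i hilt hik
    have h1 : s.get ⟨i, hilt⟩ ≤ s.get ⟨k-1, hklen⟩ := by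
      apply hsort.rel_get_of_le
      show i ≤ k - 1
      omega
    simp only [List.get_eq_getElem] at h1
    exact h1.trans (hget ▸ h)
  have hcnt : ((Finset.range n).filter (fun i => x i ≤ M)).card
      = s.countP (fun v => decide (v ≤ M)) := by
    have e1 : ((Finset.range n).filter (fun i => x i ≤ M)).card
        = l.countP (fun v => decide (v ≤ M)) := by
      rw [hl, countP_ofFn, Finset.card_filter,
        Finset.sum_range (fun i => if x i ≤ M then 1 else 0)]
      simp
    rw [e1]
    exact ((List.perm_insertionSort _ _).countP_eq _).symm
  have htake : ∀ v ∈ s.take k, (fun v => decide (v ≤ M)) v = true := by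
    intro v hv
    obtain ⟨i, hi, rfl⟩ := List.mem_iff_getElem.mp hv
    rw [List.length_take] at hi
    have hilt : i < s.length := lt_of_lt_of_le hi (min_le_right _ _)
    have hik : i < k := lt_of_lt_of_le hi (min_le_left _ _)
    rw [List.getElem_take]
    simpa using hfirst i hilt hik
  have hk' : k ≤ s.countP (fun v => decide (v ≤ M)) := by
    conv_rhs => rw [← List.take_append_drop k s]
    rw [List.countP_append]
    have hlenk : (s.take k).length = k := by
      rw [List.length_take]
      omega
    have h3 : (s.take k).countP (fun v => decide (v ≤ M)) = (s.take k).length :=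
      List.countP_eq_length.mpr htake
    omega
  omega

lemma nearCount_le {k n : ℕ} {a M : ℝ} {x : ℕ → ℝ} (h : M ≤ ordStat k n x) :
    nearCount k n a x ≤ ((Finset.range n).filter (fun i => M - a < x i)).card := by
  rw [nearCount]
  apply Finset.card_le_card
  apply Finset.monotone_filter_right
  intro i _ hi
  exact lt_of_le_of_lt (by linarith) hi.1

lemma card_gt_eq (n : ℕ) (r : ℝ) (x : ℕ → ℝ) :
    ((Finset.range n).filter (fun i => r < x i)).card
      = n - ((Finset.range n).filter (fun i => x i ≤ r)).card := by
  have h := Finset.card_filter_add_card_filter_not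
    (s := Finset.range n) (p := fun i => x i ≤ r)
  simp only [not_le, Finset.card_range] at h
  have h2 := Finset.card_filter_le (Finset.range n) (fun i => x i ≤ r)
  simp only [Finset.card_range] at h2
  omega

section ErgodicAux

variable {α : Type*} [MeasurableSpace α] {μ : Measure α}

lemma integrable_of_bdd [IsFiniteMeasure μ] {f : α → ℝ} (hf : Measurable f) {C : ℝ}
    (hC : ∀ x, |f x| ≤ C) : Integrable f μ :=
  (integrable_const C).mono' hf.aestronglyMeasurable
    (Eventually.of_forall fun x => by simpa [Real.norm_eq_abs] using hC x)

/-- running maximum `max (0, S₁, …, Sₙ)` of Birkhoff sums. -/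
def maxS (T : α → α) (f : α → ℝ) : ℕ → α → ℝ
  | 0 => fun _ => 0
  | n + 1 => fun x => max (maxS T f n x) (birkhoffSum T f (n + 1) x)

lemma maxS_nonneg (T : α → α) (f : α → ℝ) (n : ℕ) (x : α) : 0 ≤ maxS T f n x := by
  induction n with
  | zero => simp [maxS]
  | succ n ih => exact le_trans ih (le_max_left _ _)

lemma maxS_mono (T : α → α) (f : α → ℝ) {m n : ℕ} (h : m ≤ n) (x : α) :
    maxS T f m x ≤ maxS T f n x := by
  induction n with
  | zero => simp_all
  | succ n ih =>
    rcases Nat.lt_or_ge m (n+1) with h' | h'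
    · exact le_trans (ih (by omega)) (le_max_left _ _)
    · have hm : m = n + 1 := by omega
      simp [hm]

lemma birkhoffSum_le_maxS (T : α → α) (f : α → ℝ) (n : ℕ) (x : α) :
    birkhoffSum T f n x ≤ maxS T f n x := by
  cases n with
  | zero => simp [maxS, birkhoffSum_zero]
  | succ n => exact le_max_right _ _

lemma maxS_meas {T : α → α} {f : α → ℝ} (hT : Measurable T) (hf : Measurable f) (n : ℕ) :
    Measurable (maxS T f n) := by
  induction n with
  | zero => simpa [maxS] using measurable_const
  | succ n ih =>
    apply Measurable.max ih
    apply Finset.measurable_sum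
    intro i _
    exact hf.comp (hT.iterate i)

lemma birkhoffSum_abs_le (T : α → α) {f : α → ℝ} {C : ℝ} (hC : ∀ x, |f x| ≤ C)
    (n : ℕ) (x : α) : |birkhoffSum T f n x| ≤ n * C := by
  calc |birkhoffSum T f n x| ≤ ∑ i ∈ Finset.range n, |f (T^[i] x)| :=
        Finset.abs_sum_le_sum_abs _ _
  _ ≤ ∑ i ∈ Finset.range n, C := Finset.sum_le_sum fun i _ => hC _
  _ = n * C := by simp [mul_comm]

lemma maxS_bdd (T : α → α) {f : α → ℝ} {C : ℝ} (hC : ∀ x, |f x| ≤ C) (n : ℕ) (x : α) :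
    |maxS T f n x| ≤ n * C := by
  rw [abs_of_nonneg (maxS_nonneg T f n x)]
  induction n with
  | zero => simp [maxS]
  | succ n ih =>
    have hC0 : 0 ≤ C := le_trans (abs_nonneg _) (hC x)
    rw [maxS]
    apply max_le
    · exact ih.trans (by push_cast; nlinarith)
    · exact (le_abs_self _).trans (birkhoffSum_abs_le T hC (n+1) x)

lemma maxS_succ (T : α → α) (f : α → ℝ) (n : ℕ) (x : α) :
    maxS T f (n + 1) x = max (maxS T f n x) (birkhoffSum T f (n + 1) x) := rfl

lemma maxS_key (T : α → α) (f : α → ℝ) (n : ℕ) (x : α) :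
    maxS T f n x ≤ max 0 (f x + maxS T f n (T x)) := by
  induction n with
  | zero => simp [maxS]
  | succ n ih =>
    rw [maxS_succ, maxS_succ]
    apply max_le
    · refine le_trans ih (max_le_max le_rfl ?_)
      have := le_max_left (maxS T f n (T x)) (birkhoffSum T f (n + 1) (T x))
      linarith
    · have h1 : birkhoffSum T f (n+1) x = f x + birkhoffSum T f n (T x) :=
        birkhoffSum_succ' T f n x
      have h2 : birkhoffSum T f n (T x) ≤ maxS T f n (T x) :=
        birkhoffSum_le_maxS T f n (T x)
      have h3 := le_max_left (maxS T f n (T x)) (birkhoffSum T f (n + 1) (T x))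
      refine le_trans ?_ (le_max_right _ _)
      rw [h1]
      linarith

lemma maxS_pos_iff (T : α → α) (f : α → ℝ) (x : α) :
    (∃ n, 0 < maxS T f n x) ↔ (∃ n, 0 < birkhoffSum T f n x) := by
  constructor
  · rintro ⟨n, hn⟩
    induction n with
    | zero => simp [maxS] at hn
    | succ n ih =>
      rw [maxS_succ] at hn
      rcases max_choice (maxS T f n x) (birkhoffSum T f (n+1) x) with h | h <;> rw [h] at hn
      · exact ih hn
      · exact ⟨n + 1, hn⟩
  · rintro ⟨n, hn⟩
    exact ⟨n, lt_of_lt_of_le hn (birkhoffSum_le_maxS T f n x)⟩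

theorem maximal_ergodic [IsProbabilityMeasure μ] {T : α → α} (hT : MeasurePreserving T μ μ)
    {f : α → ℝ} (hf : Measurable f) {C : ℝ} (hC : ∀ x, |f x| ≤ C) :
    0 ≤ ∫ x in {x | ∃ n, 0 < birkhoffSum T f n x}, f x ∂μ := by
  have hfi : Integrable f μ := integrable_of_bdd hf hC
  set E : ℕ → Set α := fun n => {x | 0 < maxS T f n x} with hE
  have hEmeas : ∀ n, MeasurableSet (E n) := fun n =>
    measurableSet_lt measurable_const (maxS_meas hT.measurable hf n)
  have hEmono : Monotone E := by
    intro m n hmn x hx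
    exact lt_of_lt_of_le hx (maxS_mono T f hmn x)
  have hEU : ⋃ n, E n = {x | ∃ n, 0 < birkhoffSum T f n x} := by
    ext x
    simpa [hE] using maxS_pos_iff T f x
  -- integrability of maxS
  have hMint : ∀ n, Integrable (maxS T f n) μ :=
    fun n => integrable_of_bdd (maxS_meas hT.measurable hf n) (maxS_bdd T hC n)
  have hMTint : ∀ n, Integrable (fun x => maxS T f n (T x)) μ := fun n =>
    integrable_of_bdd ((maxS_meas hT.measurable hf n).comp hT.measurable)
      (fun x => maxS_bdd T hC n (T x))
  have key : ∀ n, 0 ≤ ∫ x in E n, f x ∂μ := by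
    intro n
    have step1 : ∫ x in E n, (maxS T f n x - maxS T f n (T x)) ∂μ ≤ ∫ x in E n, f x ∂μ := by
      apply setIntegral_mono_on ((hMint n).sub (hMTint n)).integrableOn hfi.integrableOn
        (hEmeas n)
      intro x hx
      simp only [Pi.sub_apply]
      have hkey := maxS_key T f n x
      have hx' : 0 < maxS T f n x := hx
      rcases le_or_gt (f x + maxS T f n (T x)) 0 with h | h
      · rw [max_eq_left h] at hkey
        linarith
      · rw [max_eq_right h.le] at hkey
        linarith
    have step2 : ∫ x in E n, maxS T f n x ∂μ = ∫ x, maxS T f n x ∂μ := by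
      apply setIntegral_eq_integral_of_forall_compl_eq_zero
      intro x hx
      have : ¬ (0 < maxS T f n x) := hx
      have := maxS_nonneg T f n x
      linarith
    have step3 : ∫ x in E n, maxS T f n (T x) ∂μ ≤ ∫ x, maxS T f n (T x) ∂μ :=
      setIntegral_le_integral (hMTint n)
        (Eventually.of_forall fun x => maxS_nonneg T f n (T x))
    have step4 : ∫ x, maxS T f n (T x) ∂μ = ∫ x, maxS T f n x ∂μ := by
      conv_rhs => rw [← hT.map_eq]
      rw [integral_map hT.measurable.aemeasurable
        (maxS_meas hT.measurable hf n).aestronglyMeasurable]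
    rw [integral_sub (hMint n).integrableOn (hMTint n).integrableOn] at step1
    linarith
  have hlim : Tendsto (fun n => ∫ x in E n, f x ∂μ) atTop
      (𝓝 (∫ x in ⋃ n, E n, f x ∂μ)) :=
    tendsto_setIntegral_of_monotone hEmeas hEmono hfi.integrableOn
  rw [← hEU]
  exact ge_of_tendsto' hlim key

theorem ergodic_birkhoff_upper [IsProbabilityMeasure μ] {T : α → α} (hT : Ergodic T μ)
    {f : α → ℝ} (hf : Measurable f) {C : ℝ} (hC : ∀ x, |f x| ≤ C) {ε : ℝ} (hε : 0 < ε) :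
    ∀ᵐ x ∂μ, ∀ᶠ n : ℕ in atTop, birkhoffSum T f n x ≤ n * (∫ y, f y ∂μ + ε) := by
  have hTm : Measurable T := hT.toMeasurePreserving.measurable
  set I : ℝ := ∫ y, f y ∂μ with hI
  set g : α → ℝ := fun x => f x - (I + ε/2) with hg
  have hgm : Measurable g := hf.sub measurable_const
  set C' : ℝ := C + |I + ε/2| with hC'
  have hgC : ∀ x, |g x| ≤ C' := fun x =>
    (abs_sub _ _).trans (add_le_add (hC x) le_rfl)
  have hSg : ∀ (n : ℕ) x, birkhoffSum T g n x = birkhoffSum T f n x - n * (I + ε/2) := by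
    intro n x
    simp [birkhoffSum, hg, Finset.sum_sub_distrib]
    ring
  have hSmeas : ∀ n, Measurable (birkhoffSum T g n) := by
    intro n
    apply Finset.measurable_sum
    intro i _
    exact hgm.comp (hTm.iterate i)
  set E' : Set α := {x | ∀ m : ℕ, ∃ n, (m : ℝ) < birkhoffSum T g n x} with hE'
  have hmem : ∀ x, x ∈ E' ↔ ∀ r : ℝ, ∃ n, r < birkhoffSum T g n x := by
    intro x
    constructor
    · intro h r
      obtain ⟨m, hm⟩ := exists_nat_ge r
      obtain ⟨n, hn⟩ := h m
      exact ⟨n, lt_of_le_of_lt hm hn⟩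
    · intro h m
      exact h m
  have hE'meas : MeasurableSet E' := by
    have : E' = ⋂ m : ℕ, ⋃ n : ℕ, {x | (m : ℝ) < birkhoffSum T g n x} := by
      ext x
      simp [hE']
    rw [this]
    exact MeasurableSet.iInter fun m => MeasurableSet.iUnion fun n =>
      measurableSet_lt measurable_const (hSmeas n)
  have hinv : T ⁻¹' E' = E' := by
    ext x
    simp only [mem_preimage]
    rw [hmem, hmem]
    constructor
    · intro h r
      obtain ⟨n, hn⟩ := h (r + C')
      refine ⟨n + 1, ?_⟩
      rw [birkhoffSum_succ']
      have h1 := (abs_le.1 (hgC x)).1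
      linarith
    · intro h r
      obtain ⟨n, hn⟩ := h (max (r + C') 0)
      have hn0 : n ≠ 0 := by
        rintro rfl
        rw [birkhoffSum_zero] at hn
        have := le_max_right (r + C') 0
        linarith
      obtain ⟨n', rfl⟩ := Nat.exists_eq_succ_of_ne_zero hn0
      refine ⟨n', ?_⟩
      rw [birkhoffSum_succ'] at hn
      have h1 := (abs_le.1 (hgC x)).2
      have h2 := le_max_left (r + C') 0
      linarith
  rcases hT.ae_empty_or_univ hE'meas hinv with hemp | huniv
  · have hnmem : ∀ᵐ x ∂μ, x ∉ E' :=
      measure_eq_zero_iff_ae_notMem.1 (ae_eq_empty.mp hemp)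
    filter_upwards [hnmem] with x hx
    rw [hE'] at hx
    simp only [mem_setOf_eq, not_forall, not_exists, not_lt] at hx
    obtain ⟨m, hm⟩ := hx
    obtain ⟨n₀, hn₀⟩ := exists_nat_ge ((m : ℝ) / (ε/2))
    filter_upwards [eventually_ge_atTop n₀] with n hn
    have hmn := hm n
    rw [hSg] at hmn
    have hnm : (m : ℝ) ≤ n * (ε/2) := by
      have h2 : ((m : ℝ)/(ε/2)) ≤ n := hn₀.trans (Nat.cast_le.2 hn)
      rw [div_le_iff₀ (by linarith)] at h2
      linarith
    have e1 : (n : ℝ) * (I + ε) = n * (I + ε/2) + n * (ε/2) := by ring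
    linarith
  · exfalso
    have haeE' : ∀ᵐ x ∂μ, x ∈ E' := eventuallyEq_univ.mp huniv
    set Eg : Set α := {x | ∃ n, 0 < birkhoffSum T g n x} with hEg
    have hsub : E' ⊆ Eg := by
      intro x hx
      obtain ⟨n, hn⟩ := hx 0
      exact ⟨n, by simpa using hn⟩
    have haeEg : Eg =ᵐ[μ] (univ : Set α) :=
      eventuallyEq_univ.mpr (haeE'.mono fun x hx => hsub hx)
    have hmax := maximal_ergodic hT.toMeasurePreserving hgm hgC
    rw [← hEg] at hmax
    rw [setIntegral_congr_set haeEg, setIntegral_univ] at hmax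
    have : ∫ x, g x ∂μ = -(ε/2) := by
      rw [hg]
      rw [integral_sub (integrable_of_bdd hf hC) (integrable_const _)]
      simp [hI]
    linarith

theorem ergodic_birkhoff_lower [IsProbabilityMeasure μ] {T : α → α} (hT : Ergodic T μ)
    {f : α → ℝ} (hf : Measurable f) {C : ℝ} (hC : ∀ x, |f x| ≤ C) {ε : ℝ} (hε : 0 < ε) :
    ∀ᵐ x ∂μ, ∀ᶠ n : ℕ in atTop, (n : ℝ) * (∫ y, f y ∂μ - ε) ≤ birkhoffSum T f n x := by
  have h := ergodic_birkhoff_upper hT hf.neg (C := C)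
    (fun x => by simpa using hC x) hε
  filter_upwards [h] with x hx
  filter_upwards [hx] with n hn
  have hneg : birkhoffSum T (-f) n x = -birkhoffSum T f n x := by
    simp [birkhoffSum]
  have hint : ∫ y, (-f) y ∂μ = -∫ y, f y ∂μ := integral_neg f
  rw [hneg, hint] at hn
  have e1 : (n : ℝ) * (-∫ y, f y ∂μ + ε) = -((n : ℝ) * (∫ y, f y ∂μ - ε)) := by ring
  linarith

end ErgodicAux

lemma seqShift_iterate (i : ℕ) (y : ℕ → ℝ) (n : ℕ) : (seqShift^[i] y) n = y (n + i) := by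
  induction i generalizing y n with
  | zero => simp
  | succ i ih =>
    rw [Function.iterate_succ_apply, ih]
    rfl

lemma measurable_indic (r : ℝ) :
    Measurable (fun y : ℕ → ℝ => if y 0 ≤ r then (1:ℝ) else 0) :=
  Measurable.ite (measurableSet_le (measurable_pi_apply 0) measurable_const)
    measurable_const measurable_const

lemma indic_bdd (r : ℝ) : ∀ y : ℕ → ℝ, |if y 0 ≤ r then (1:ℝ) else 0| ≤ 1 := by
  intro y
  split <;> simp

lemma cnt_birkhoff (r : ℝ) (n : ℕ) (y : ℕ → ℝ) :
    birkhoffSum seqShift (fun z => if z 0 ≤ r then (1:ℝ) else 0) n y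
      = (((Finset.range n).filter (fun i => y i ≤ r)).card : ℝ) := by
  rw [Finset.card_filter]
  push_cast
  rw [birkhoffSum]
  apply Finset.sum_congr rfl
  intro i _
  rw [seqShift_iterate]
  simp

theorem stmt19 {Ω : Type*} [MeasurableSpace Ω] (μ : Measure Ω) [IsProbabilityMeasure μ]
    (X : ℕ → Ω → ℝ) (hX : ∀ n, Measurable (X n))
    (herg : Ergodic seqShift (Measure.map (path X) μ))
    (hsup : rightEndpoint μ (X 0) = ⊤)
    (a : ℝ) (ha : 0 < a)
    (k : ℕ → ℕ) (hk : ∀ n, 1 ≤ n → 1 ≤ k n ∧ k n ≤ n)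
    (hk1 : Tendsto (fun n => (k n : ℝ) / n) atTop (𝓝 1))
    (N : ℝ → Ω → ℕ) (Z : Ω → ℝ) (hZ : ∀ᵐ ω ∂μ, 0 < Z ω)
    (c : ℝ → ℝ) (hc : ∀ t, 0 < c t) (hct : Tendsto c atTop atTop)
    (hNc : ∀ᵐ ω ∂μ, Tendsto (fun t => (N t ω : ℝ) / c t) atTop (𝓝 (Z ω))) :
    ∀ᵐ ω ∂μ, Tendsto
      (fun t => (nearCount (k (N t ω)) (N t ω) a (path X ω) : ℝ) / c t) atTop (𝓝 0) := by
  -- the path map and image measure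
  have hpath : Measurable (path X) := measurable_pi_lambda _ hX
  set ν := Measure.map (path X) μ with hν
  haveI : IsProbabilityMeasure ν := Measure.isProbabilityMeasure_map hpath.aemeasurable
  -- distribution function
  set F : ℝ → ℝ := fun r => (μ {ω | X 0 ω ≤ r}).toReal with hF
  have hμmeas : ∀ r : ℝ, MeasurableSet {ω | X 0 ω ≤ r} := fun r =>
    measurableSet_le (hX 0) measurable_const
  have hFle1 : ∀ r : ℝ, F r ≤ 1 := by
    intro r
    rw [hF]
    simpa using ENNReal.toReal_mono ENNReal.one_ne_top prob_le_one
  have hFlt1 : ∀ r : ℝ, F r < 1 := by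
    intro r
    have hne : μ {ω | X 0 ω ≤ r} ≠ ⊤ := measure_ne_top μ _
    have hlt : μ {ω | X 0 ω ≤ r} < 1 := by
      by_contra hcon
      push_neg at hcon
      have h1 : μ {ω | X 0 ω ≤ r} = 1 := le_antisymm prob_le_one hcon
      have h2 : rightEndpoint μ (X 0) ≤ (r : EReal) := by
        apply sSup_le
        rintro e ⟨s, hs, rfl⟩
        simp only [mem_setOf_eq] at hs
        by_contra hsr
        push_neg at hsr
        have hrs : r < s := by exact_mod_cast hsr
        have hmono : μ {ω | X 0 ω ≤ r} ≤ μ {ω | X 0 ω ≤ s} :=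
          measure_mono (fun ω hω => le_trans hω hrs.le)
        rw [h1] at hmono
        exact absurd hs (not_lt.2 hmono)
      rw [hsup] at h2
      simp at h2
    have := ENNReal.toReal_lt_toReal hne ENNReal.one_ne_top |>.mpr hlt
    simpa [hF] using this
  have hint : ∀ r : ℝ, (∫ y, (if y 0 ≤ r then (1:ℝ) else 0) ∂ν) = F r := by
    intro r
    have hs : MeasurableSet {y : ℕ → ℝ | y 0 ≤ r} :=
      measurableSet_le (measurable_pi_apply 0) measurable_const
    have heq : (fun y : ℕ → ℝ => if y 0 ≤ r then (1:ℝ) else 0)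
        = Set.indicator {y : ℕ → ℝ | y 0 ≤ r} 1 := by
      funext y
      simp [Set.indicator_apply]
    rw [heq, integral_indicator_one hs, hν, map_measureReal_apply hpath hs]
    rfl
  -- Birkhoff bounds, transported to Ω
  have hupper : ∀ m : ℕ, ∀ᵐ ω ∂μ, ∀ᶠ n : ℕ in atTop,
      ((((Finset.range n).filter (fun i => path X ω i ≤ (m:ℝ))).card : ℝ))
        ≤ n * (F (m:ℝ) + (1 - F (m:ℝ))/2) := by
    intro m
    have hε : (0:ℝ) < (1 - F (m:ℝ))/2 := by
      have := hFlt1 (m:ℝ)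
      linarith
    have h := ergodic_birkhoff_upper herg (measurable_indic (m:ℝ)) (indic_bdd (m:ℝ)) hε
    have h2 := ae_of_ae_map hpath.aemeasurable h
    filter_upwards [h2] with ω hω
    filter_upwards [hω] with n hn
    rw [cnt_birkhoff] at hn
    have hIeq : (∫ y, (if y 0 ≤ (m:ℝ) then (1:ℝ) else 0) ∂ν) = F (m:ℝ) := hint (m:ℝ)
    rw [hIeq] at hn
    exact hn
  have hlower : ∀ m : ℕ, ∀ᵐ ω ∂μ, ∀ᶠ n : ℕ in atTop,
      (n:ℝ) * (F ((m:ℝ) - a) - 1/((m:ℝ)+1))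
        ≤ (((Finset.range n).filter (fun i => path X ω i ≤ (m:ℝ) - a)).card : ℝ) := by
    intro m
    have hε : (0:ℝ) < 1/((m:ℝ)+1) := by positivity
    have h := ergodic_birkhoff_lower herg (measurable_indic ((m:ℝ) - a))
      (indic_bdd ((m:ℝ) - a)) hε
    have h2 := ae_of_ae_map hpath.aemeasurable h
    filter_upwards [h2] with ω hω
    filter_upwards [hω] with n hn
    rw [cnt_birkhoff] at hn
    have hIeq : (∫ y, (if y 0 ≤ (m:ℝ) - a then (1:ℝ) else 0) ∂ν) = F ((m:ℝ) - a) :=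
      hint ((m:ℝ) - a)
    rw [hIeq] at hn
    exact hn
  -- the tail tends to zero
  have hcompl : ∀ r : ℝ, 1 - F r = (μ {ω | r < X 0 ω}).toReal := by
    intro r
    have hc1 : {ω | r < X 0 ω} = {ω | X 0 ω ≤ r}ᶜ := by
      ext ω
      simp [not_le]
    rw [hc1, measure_compl (hμmeas r) (measure_ne_top μ _), measure_univ,
      ENNReal.toReal_sub_of_le prob_le_one ENNReal.one_ne_top]
    simp [hF]
  have htail : Tendsto (fun m : ℕ => 1 - F ((m:ℝ) - a)) atTop (𝓝 0) := by
    have hGmeas : ∀ m : ℕ, MeasurableSet {ω | (m:ℝ) - a < X 0 ω} := fun m =>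
      measurableSet_lt measurable_const (hX 0)
    have hanti : Antitone (fun m : ℕ => {ω | (m:ℝ) - a < X 0 ω}) := by
      intro i j hij ω hω
      simp only [mem_setOf_eq] at hω ⊢
      have : (i:ℝ) ≤ (j:ℝ) := Nat.cast_le.2 hij
      linarith
    have hiInter : ⋂ m : ℕ, {ω | (m:ℝ) - a < X 0 ω} = ∅ := by
      ext ω
      simp only [mem_iInter, mem_setOf_eq, mem_empty_iff_false, iff_false, not_forall, not_lt]
      obtain ⟨m, hm⟩ := exists_nat_ge (X 0 ω + a)
      exact ⟨m, by linarith⟩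
    have h0 := tendsto_measure_iInter_atTop (μ := μ)
      (fun m => (hGmeas m).nullMeasurableSet) hanti ⟨0, measure_ne_top μ _⟩
    rw [hiInter] at h0
    simp only [measure_empty] at h0
    have h1 : Tendsto (fun m : ℕ => (μ {ω | (m:ℝ) - a < X 0 ω}).toReal) atTop (𝓝 0) := by
      have h2 := (ENNReal.tendsto_toReal (by simp : (0:ℝ≥0∞) ≠ ⊤)).comp h0
      exact h2
    simpa [hcompl] using h1
  have hδ0 : Tendsto (fun m : ℕ => 1/((m:ℝ)+1)) atTop (𝓝 0) :=
    tendsto_one_div_add_atTop_nhds_zero_nat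
  -- main almost-everywhere argument
  rw [← ae_all_iff] at hupper
  rw [← ae_all_iff] at hlower
  filter_upwards [hNc, hZ, hupper, hlower] with ω hA hZω hU hL
  -- N t ω → ∞
  have hNt : Tendsto (fun t => N t ω) atTop atTop := by
    have h1 : Tendsto (fun t => (N t ω : ℝ) / c t * c t) atTop atTop :=
      Tendsto.pos_mul_atTop hZω hA hct
    have h2 : (fun t => (N t ω : ℝ) / c t * c t) = fun t => (N t ω : ℝ) := by
      funext t
      exact div_mul_cancel₀ _ (hc t).ne'
    rw [h2] at h1
    exact tendsto_natCast_atTop_iff.mp h1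
  rw [Metric.tendsto_nhds]
  intro ε hε
  -- choose a level m
  have hchoice : ∀ᶠ m : ℕ in atTop,
      (Z ω + 1) * ((1 - F ((m:ℝ) - a)) + 1/((m:ℝ)+1)) < ε := by
    have hlim : Tendsto (fun m : ℕ => (Z ω + 1) * ((1 - F ((m:ℝ) - a)) + 1/((m:ℝ)+1)))
        atTop (𝓝 ((Z ω + 1) * (0 + 0))) := (htail.add hδ0).const_mul _
    simp only [add_zero, mul_zero] at hlim
    exact hlim.eventually (gt_mem_nhds hε)
  obtain ⟨m, hm⟩ := hchoice.exists
  set r : ℝ := (1 - F ((m:ℝ) - a)) + 1/((m:ℝ)+1) with hr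
  clear_value r
  have hr0 : 0 ≤ r := by
    have h1 := hFle1 ((m:ℝ) - a)
    have h2 : (0:ℝ) < 1/((m:ℝ)+1) := by positivity
    rw [hr]
    linarith
  set q : ℝ := 1 - F (m:ℝ) with hq
  clear_value q
  have hq0 : 0 < q := by
    have := hFlt1 (m:ℝ)
    rw [hq]
    linarith
  obtain ⟨n1, hn1⟩ := eventually_atTop.1 (hU m)
  obtain ⟨n2, hn2⟩ := eventually_atTop.1 (hL m)
  have hkev : ∀ᶠ n : ℕ in atTop, 1 - q/2 < (k n : ℝ)/n :=
    hk1.eventually (lt_mem_nhds (by linarith : 1 - q/2 < 1))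
  obtain ⟨n3, hn3⟩ := eventually_atTop.1 hkev
  filter_upwards [hNt.eventually (eventually_ge_atTop (max (max n1 n2) (max n3 1))),
    hA.eventually (Metric.ball_mem_nhds (Z ω) one_pos)] with t ht1 ht2
  set n : ℕ := N t ω with hn
  have hgen1 : n1 ≤ n := le_trans (le_trans (le_max_left n1 n2) (le_max_left _ _)) ht1
  have hgen2 : n2 ≤ n := le_trans (le_trans (le_max_right n1 n2) (le_max_left _ _)) ht1
  have hgen3 : n3 ≤ n := le_trans (le_trans (le_max_left n3 1) (le_max_right _ _)) ht1
  have hnpos : 1 ≤ n := le_trans (le_trans (le_max_right n3 1) (le_max_right _ _)) ht1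
  have hnposR : (0:ℝ) < n := by exact_mod_cast hnpos
  obtain ⟨hkn1, hkn2⟩ := hk n hnpos
  -- the ratio bound
  have hratio : (n:ℝ) / c t ≤ Z ω + 1 := by
    rw [Real.dist_eq] at ht2
    have h2 := (abs_lt.1 ht2).2
    linarith
  -- the order statistic exceeds m
  have hcntlt : ((Finset.range n).filter (fun i => path X ω i ≤ (m:ℝ))).card < k n := by
    have hcnt := hn1 n hgen1
    have hk3 := hn3 n hgen3
    have hkgt : (n:ℝ) * (1 - q/2) < k n := by
      have h4 := (lt_div_iff₀ hnposR).1 hk3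
      linarith [h4]
    have heq : F (m:ℝ) + (1 - F (m:ℝ))/2 = 1 - q/2 := by
      rw [hq]; ring
    rw [heq] at hcnt
    exact_mod_cast lt_of_le_of_lt hcnt hkgt
  have hord : (m:ℝ) < ordStat (k n) n (path X ω) := lt_ordStat hkn1 hkn2 hcntlt
  -- bound on nearCount
  have hcnt' := hn2 n hgen2
  set L : ℕ := ((Finset.range n).filter (fun i => path X ω i ≤ (m:ℝ) - a)).card with hL2
  clear_value L
  have hLn : L ≤ n := by
    rw [hL2]
    exact le_trans (Finset.card_filter_le _ _) (by simp)
  have hnear : (nearCount (k n) n a (path X ω) : ℝ) ≤ (n:ℝ) * r := by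
    have h5 := nearCount_le (a := a) (M := (m:ℝ)) hord.le
    have h6 := card_gt_eq n ((m:ℝ) - a) (path X ω)
    have h7 : nearCount (k n) n a (path X ω) ≤ n - L := by
      rw [hL2, ← h6]
      exact h5
    have h8 : (nearCount (k n) n a (path X ω) : ℝ) ≤ (n:ℝ) - L := by
      have := Nat.cast_le (α := ℝ) |>.2 h7
      rwa [Nat.cast_sub hLn] at this
    have h9 : (n:ℝ) * (F ((m:ℝ) - a) - 1/((m:ℝ)+1)) ≤ L := hcnt'
    have e1 : (n:ℝ) * r = (n:ℝ) - (n:ℝ) * (F ((m:ℝ) - a) - 1/((m:ℝ)+1)) := by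
      rw [hr]; ring
    linarith
  -- conclude
  have hct' := hc t
  have hnn : (0:ℝ) ≤ (nearCount (k n) n a (path X ω) : ℝ) / c t :=
    div_nonneg (Nat.cast_nonneg _) hct'.le
  rw [Real.dist_eq, sub_zero, abs_of_nonneg hnn]
  calc (nearCount (k n) n a (path X ω) : ℝ) / c t
      ≤ ((n:ℝ) * r) / c t := by
        gcongr
  _ = ((n:ℝ) / c t) * r := by ring
  _ ≤ (Z ω + 1) * r := mul_le_mul_of_nonneg_right hratio hr0
  _ < ε := hm
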